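/- For every real m ≥ 1 there exists a constant c > 0 such that for all x ≥ 0: (1 - x^m)² ≥ c · ( x^{m+1} - (m+1)·x + m ). -/

import Mathlib

theorem stmt_4 (m : ℝ) (hm : 1 ≤ m) :
    ∃ c : ℝ, 0 < c ∧ ∀ x : ℝ, 0 ≤ x →
      c * (x ^ (m + 1) - (m + 1) * x + m) ≤ (1 - x ^ m) ^ 2 := by
  have hm0 : (0:ℝ) < m := lt_of_lt_of_le one_pos hm
  refine ⟨1 / m, by positivity, ?_⟩
  intro x hx
  rcases eq_or_lt_of_le hx with h0 | hxpos
  · have h1 : (0:ℝ) ^ m = 0 := Real.zero_rpow (ne_of_gt hm0)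
    have h2 : (0:ℝ) ^ (m + 1) = 0 := Real.zero_rpow (by positivity)
    rw [← h0, h1, h2]
    rw [div_mul_eq_mul_div, one_mul]
    rw [div_le_iff₀ hm0]
    nlinarith
  -- x > 0
  set a := x ^ m with ha
  have ha0 : 0 ≤ a := Real.rpow_nonneg hx m
  -- Fact (1)
  have fact1 : 0 ≤ (a - 1) * (a - x) := by
    rcases le_total x 1 with hx1 | hx1
    · have h1 : a ≤ 1 := Real.rpow_le_one hx hx1 (le_of_lt hm0)
      have h2 : a ≤ x := by
        have := Real.rpow_le_rpow_of_exponent_ge hxpos hx1 hm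
        simpa [Real.rpow_one] using this
      nlinarith [mul_nonneg (by linarith : (0:ℝ) ≤ 1 - a) (by linarith : (0:ℝ) ≤ x - a)]
    · have h1 : 1 ≤ a := Real.one_le_rpow hx1 (le_of_lt hm0)
      have h2 : x ≤ a := by
        have := Real.rpow_le_rpow_of_exponent_le hx1 hm
        simpa [Real.rpow_one] using this
      exact mul_nonneg (by linarith) (by linarith)
  -- AM-GM : m * x^(m-1) ≤ 1 + (m-1) * a
  have amgm : m * x ^ (m - 1) ≤ 1 + (m - 1) * a := by
    have hw : (1:ℝ)/m + (m-1)/m = 1 := by field_simp; ring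
    have key := Real.geom_mean_le_arith_mean2_weighted
      (by positivity : (0:ℝ) ≤ 1/m) (div_nonneg (by linarith) (le_of_lt hm0))
      (by norm_num : (0:ℝ) ≤ 1) ha0 hw
    have hpow : (1:ℝ) ^ ((1:ℝ)/m) * a ^ ((m-1)/m) = x ^ (m - 1) := by
      rw [Real.one_rpow, one_mul, ha, ← Real.rpow_mul hx]
      congr 1
      field_simp
    rw [hpow] at key
    have := mul_le_mul_of_nonneg_left key (le_of_lt hm0)
    calc m * x ^ (m-1) ≤ m * (1/m * 1 + (m-1)/m * a) := this
      _ = 1 + (m-1) * a := by field_simp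
  -- multiply by x : m * a ≤ x + (m-1) * a * x
  have fact2 : m * a ≤ x + (m - 1) * a * x := by
    have hxa : x ^ (m - 1) * x = a := by
      rw [ha, ← Real.rpow_add_one hxpos.ne' (m-1)]
      norm_num
    have := mul_le_mul_of_nonneg_right amgm (le_of_lt hxpos)
    calc m * a = m * x ^ (m-1) * x := by rw [mul_assoc, hxa]
      _ ≤ (1 + (m-1) * a) * x := this
      _ = x + (m-1) * a * x := by ring
  -- relate x^(m+1) to a * x
  have hb : x ^ (m + 1) = a * x := by
    rw [ha, Real.rpow_add hxpos, Real.rpow_one]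
  rw [hb]
  rw [div_mul_eq_mul_div, one_mul, div_le_iff₀ hm0]
  nlinarith [fact1, fact2]
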